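/- arXiv:1404.6317 — 3 statements merged into one kernel-verified Lean document; each statement's English description precedes it below -/
import Mathlib

section
/- For every real number D, every real r, every real x, and every polynomial function p : ℝ → ℝ of degree at most 7, one has p(x + rD) = (μp)(x) + (r/2)(δp)(x) + ((r² − 1)/8)(μδ²p)(x) + ((r³ − r)/48)(δ³p)(x) + ((9 − 10r² + r⁴)/384)(μδ⁴p)(x) + ((9r − 10r³ + r⁵)/3840)(δ⁵p)(x) + ((−225 + 259r² − 35r⁴ + r⁶)/46080)(μδ⁶p)(x) + ((−225r + 259r³ − 35r⁵ + r⁷)/645120)(δ⁷p)(x). That is, the septic coupling operator (the truncation of the shift expansion through seventh differences, with coupling label γ = 1) reproduces the shifted value exactly on polynomials of degree at most seven. -/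
set_option maxHeartbeats 4000000


/-- Staggered mean operator: `(μ f)(x) = (f(x+D) + f(x−D))/2`. -/
noncomputable def mu (D : ℝ) (f : ℝ → ℝ) : ℝ → ℝ := fun x => (f (x + D) + f (x - D)) / 2

/-- Staggered difference operator: `(δ f)(x) = f(x+D) − f(x−D)`. -/
noncomputable def de (D : ℝ) (f : ℝ → ℝ) : ℝ → ℝ := fun x => f (x + D) - f (x - D)

/-- The septic coupling operator (the shift expansion truncated through seventh
differences, with coupling label γ = 1) reproduces the shifted value `p(x + rD)`
exactly on polynomials of degree at most seven. -/
theorem septic_coupling_exact_on_septics (D r x : ℝ) (p : Polynomial ℝ)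
    (hp : p.natDegree ≤ 7) :
    p.eval (x + r * D) =
      mu D (fun y => p.eval y) x + (r / 2) * de D (fun y => p.eval y) x
      + ((r ^ 2 - 1) / 8) * mu D (de D (de D (fun y => p.eval y))) x
      + ((r ^ 3 - r) / 48) * de D (de D (de D (fun y => p.eval y))) x
      + ((9 - 10 * r ^ 2 + r ^ 4) / 384) *
          mu D (de D (de D (de D (de D (fun y => p.eval y))))) x
      + ((9 * r - 10 * r ^ 3 + r ^ 5) / 3840) *
          de D (de D (de D (de D (de D (fun y => p.eval y))))) x
      + ((-225 + 259 * r ^ 2 - 35 * r ^ 4 + r ^ 6) / 46080) *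
          mu D (de D (de D (de D (de D (de D (de D (fun y => p.eval y))))))) x
      + ((-225 * r + 259 * r ^ 3 - 35 * r ^ 5 + r ^ 7) / 645120) *
          de D (de D (de D (de D (de D (de D (de D (fun y => p.eval y))))))) x := by
  have hev : ∀ y : ℝ, p.eval y = ∑ i ∈ Finset.range 8, p.coeff i * y ^ i := fun y =>
    Polynomial.eval_eq_sum_range' (by omega : p.natDegree < 8) y
  simp only [mu, de, hev, Finset.sum_range_succ, Finset.sum_range_zero]
  ring
end

section
/- For every real number D, every real r, every real x, and every polynomial function p : ℝ → ℝ of degree at most 4, one has p(x + rD) − p(x − rD) = r(δp)(x) + ((r³ − r)/24)(δ³p)(x). That is, the difference C₊ − C₋ of the cubic coupling operators (with coupling label γ = 1) coincides exactly with the shift difference E^{r/2} − E^{−r/2} on polynomials of degree at most four — the key property of the coupling used in the consistency proof. -/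
/-- The difference `C₊ − C₋ = rδ + ((r³−r)/24)δ³` of the cubic coupling operators
coincides exactly with the shift difference `E^{r/2} − E^{−r/2}` on polynomials
of degree at most four. -/
theorem coupling_difference_exact_on_quartics (D r x : ℝ) (p : Polynomial ℝ)
    (hp : p.natDegree ≤ 4) :
    p.eval (x + r * D) - p.eval (x - r * D) =
      r * de D (fun y => p.eval y) x
      + ((r ^ 3 - r) / 24) * de D (de D (de D (fun y => p.eval y))) x := by
  have h : ∀ y : ℝ, p.eval y = ∑ i ∈ Finset.range 5, p.coeff i * y ^ i := fun y =>
    Polynomial.eval_eq_sum_range' (lt_of_le_of_lt hp (by norm_num)) y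
  simp only [de, h, Finset.sum_range_succ, Finset.sum_range_zero]
  ring
end

section
/- Let D > 0, let r be a real number with |r| < 5, let x be real, and let f : ℝ → ℝ be six times continuously differentiable on [x − 5D, x + 5D]. Then there exists ξ ∈ (x − 5D, x + 5D) such that f(x + rD) − [(μf)(x) + (r/2)(δf)(x) + ((r² − 1)/8)(μδ²f)(x) + ((r³ − r)/48)(δ³f)(x) + ((9 − 10r² + r⁴)/384)(μδ⁴f)(x) + ((9r − 10r³ + r⁵)/3840)(δ⁵f)(x)] = (D⁶/720)(r² − 1)(r² − 9)(r² − 25) f⁽⁶⁾(ξ). In particular, the consistency error of the quintic inter-patch coupling of the gap-tooth scheme is O(D⁶) for smooth fields, uniformly for |r| ≤ 1. -/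
open Set Function Polynomial

lemma evq_iter (n : ℕ) {f g : ℝ → ℝ} {s : ℝ} (h : f =ᶠ[nhds s] g) :
    deriv^[n] f =ᶠ[nhds s] deriv^[n] g := by
  induction n generalizing f g with
  | zero => exact h
  | succ n ih =>
    rw [Function.iterate_succ_apply, Function.iterate_succ_apply]
    exact ih h.deriv

lemma iter_const_mul (n : ℕ) (c : ℝ) (h : ℝ → ℝ) :
    deriv^[n] (fun s => c * h s) = fun s => c * deriv^[n] h s := by
  induction n generalizing h with
  | zero => rfl
  | succ n ih =>
    rw [Function.iterate_succ_apply, deriv_const_mul_field' c, ih]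
    simp [Function.iterate_succ_apply]

lemma chain_affine (x D : ℝ) (n : ℕ) :
    ∀ (f : ℝ → ℝ) (U : Set ℝ), IsOpen U → ContDiffOn ℝ n f U → ∀ s : ℝ, x + s * D ∈ U →
      deriv^[n] (fun t => f (x + t * D)) s = D ^ n * deriv^[n] f (x + s * D) := by
  induction n with
  | zero => intro f U _ _ s _; simp
  | succ n ih =>
    intro f U hU hf s hs
    have hVo : IsOpen ((fun t : ℝ => x + t * D) ⁻¹' U) :=
      hU.preimage (by continuity)
    have hder : ∀ t ∈ (fun t : ℝ => x + t * D) ⁻¹' U,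
        deriv (fun t => f (x + t * D)) t = D * deriv f (x + t * D) := by
      intro t ht
      have hfd : HasDerivAt f (deriv f (x + t * D)) (x + t * D) :=
        ((hf.contDiffAt (hU.mem_nhds ht)).differentiableAt
          (by simp)).hasDerivAt
      have hin : HasDerivAt (fun t : ℝ => x + t * D) D t := by
        simpa using ((hasDerivAt_id t).mul_const D).const_add x
      have h2 : HasDerivAt (fun t => f (x + t * D)) (deriv f (x + t * D) * D) t :=
        hfd.comp t hin
      rw [h2.deriv]; ring
    have hev : deriv (fun t => f (x + t * D)) =ᶠ[nhds s]
        (fun t => D * deriv f (x + t * D)) :=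
      Filter.eventuallyEq_of_mem (hVo.mem_nhds hs) hder
    rw [Function.iterate_succ_apply]
    have := (evq_iter n hev).self_of_nhds
    rw [this, iter_const_mul]
    have hf' : ContDiffOn ℝ n (deriv f) U := hf.deriv_of_isOpen hU (by exact_mod_cast le_rfl)
    show D * deriv^[n] (fun t => deriv f (x + t * D)) s = _
    rw [ih (deriv f) U hU hf' s hs, ← Function.iterate_succ_apply]
    ring

lemma iter_sub (n : ℕ) :
    ∀ (F R : ℝ → ℝ) (V : Set ℝ), IsOpen V → ContDiffOn ℝ n F V → ContDiff ℝ n R →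
      ∀ s ∈ V, deriv^[n] (fun t => F t - R t) s = deriv^[n] F s - deriv^[n] R s := by
  induction n with
  | zero => intro F R V _ _ _ s _; simp
  | succ n ih =>
    intro F R V hV hF hR s hs
    have hder : ∀ t ∈ V, deriv (fun t => F t - R t) t = deriv F t - deriv R t := by
      intro t ht
      exact deriv_fun_sub
        ((hF.contDiffAt (hV.mem_nhds ht)).differentiableAt
          (by simp))
        (hR.differentiable (by simp) t)
    have hev : deriv (fun t => F t - R t) =ᶠ[nhds s] (fun t => deriv F t - deriv R t) :=
      Filter.eventuallyEq_of_mem (hV.mem_nhds hs) hder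
    rw [Function.iterate_succ_apply, (evq_iter n hev).self_of_nhds]
    have hF' : ContDiffOn ℝ n (deriv F) V := hF.deriv_of_isOpen hV (by exact_mod_cast le_rfl)
    have hR' : ContDiff ℝ n (deriv R) := (contDiff_succ_iff_deriv.mp hR).2.2
    rw [ih (deriv F) (deriv R) V hV hF' hR' s hs]
    rw [← Function.iterate_succ_apply, ← Function.iterate_succ_apply]

lemma rolle_iter (n : ℕ) :
    ∀ (g : ℝ → ℝ) (t : ℕ → ℝ),
      (∀ i < n + 1, t i < t (i + 1)) → (∀ i ≤ n + 1, g (t i) = 0) →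
      ContinuousOn g (Icc (t 0) (t (n + 1))) →
      ContDiffOn ℝ (n + 1) g (Ioo (t 0) (t (n + 1))) →
      ∃ c ∈ Ioo (t 0) (t (n + 1)), deriv^[n + 1] g c = 0 := by
  induction n with
  | zero =>
    intro g t hm hz hc _
    obtain ⟨c, hc1, hc2⟩ := exists_deriv_eq_zero (hm 0 (by norm_num)) hc
      ((hz 0 (by norm_num)).trans (hz 1 (by norm_num)).symm)
    exact ⟨c, hc1, by simpa using hc2⟩
  | succ n ih =>
    intro g t hm hz hc hd
    have hmono : ∀ i j, i ≤ j → j ≤ n + 2 → t i ≤ t j := by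
      intro i j hij hj
      induction j with
      | zero => exact le_of_eq (by rw [Nat.le_zero.mp hij])
      | succ j ihj =>
        rcases Nat.lt_or_ge i (j+1) with h | h
        · exact le_trans (ihj (by omega) (by omega)) (le_of_lt (hm j (by omega)))
        · have : i = j + 1 := by omega
          simp [this]
    have H : ∀ i, i ≤ n + 1 → ∃ c ∈ Ioo (t i) (t (i + 1)), deriv g c = 0 := by
      intro i hi
      apply exists_deriv_eq_zero (hm i (by omega))
        (hc.mono (Icc_subset_Icc (hmono 0 i (by omega) (by omega))
          (hmono (i+1) (n+2) (by omega) (by omega))))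
        ((hz i (by omega)).trans (hz (i+1) (by omega)).symm)
    choose! s hs1 hs2 using H
    have hsub : Icc (s 0) (s (n + 1)) ⊆ Ioo (t 0) (t (n + 2)) := by
      apply Icc_subset_Ioo
      · exact (hs1 0 (by omega)).1
      · exact lt_of_lt_of_le (hs1 (n+1) le_rfl).2 (hmono (n+2) (n+2) le_rfl le_rfl)
    have hd' : ContDiffOn ℝ (n + 1) (deriv g) (Ioo (t 0) (t (n + 2))) :=
      hd.deriv_of_isOpen isOpen_Ioo (by exact_mod_cast le_rfl)
    obtain ⟨c, hc1, hc2⟩ := ih (deriv g) s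
      (fun i hi => lt_trans (hs1 i (by omega)).2 (hs1 (i+1) (by omega)).1)
      (fun i hi => hs2 i hi)
      ((hd'.continuousOn).mono hsub)
      (hd'.mono (fun y hy => hsub (Ioo_subset_Icc_self hy)))
    refine ⟨c, hsub (Ioo_subset_Icc_self hc1), ?_⟩
    rw [Function.iterate_succ_apply]
    exact hc2

lemma poly6 (b0 b1 b2 b3 b4 b5 b6 : ℝ) (s : ℝ) :
    deriv^[6] (fun t : ℝ => b0 + b1*t + b2*t^2 + b3*t^3 + b4*t^4 + b5*t^5 + b6*t^6) s
      = 720 * b6 := by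
  have hp : (fun t : ℝ => b0 + b1*t + b2*t^2 + b3*t^3 + b4*t^4 + b5*t^5 + b6*t^6)
      = fun t : ℝ => (C b0 + C b1 * X + C b2 * X^2 + C b3 * X^3 + C b4 * X^4 + C b5 * X^5
        + C b6 * X^6).eval t := by
    funext t; simp [eval_add, eval_mul, eval_pow]
  have key : ∀ (p : ℝ[X]), deriv (fun t => p.eval t) = fun t => p.derivative.eval t := by
    intro p; funext t; exact Polynomial.deriv (𝕜 := ℝ) (p := p)
  rw [hp]
  rw [show (6:ℕ) = 5+1 from rfl, Function.iterate_succ_apply, key]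
  rw [show (5:ℕ) = 4+1 from rfl, Function.iterate_succ_apply, key]
  rw [show (4:ℕ) = 3+1 from rfl, Function.iterate_succ_apply, key]
  rw [show (3:ℕ) = 2+1 from rfl, Function.iterate_succ_apply, key]
  rw [show (2:ℕ) = 1+1 from rfl, Function.iterate_succ_apply, key]
  rw [show (1:ℕ) = 0+1 from rfl, Function.iterate_succ_apply, key]
  simp
  ring

/-- The quintic coupling expression, as a function of the offset `s`. -/
noncomputable def Qc (D x : ℝ) (f : ℝ → ℝ) (s : ℝ) : ℝ :=
  mu D f x + (s / 2) * de D f x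
    + ((s ^ 2 - 1) / 8) * mu D (de D (de D f)) x
    + ((s ^ 3 - s) / 48) * de D (de D (de D f)) x
    + ((9 - 10 * s ^ 2 + s ^ 4) / 384) * mu D (de D (de D (de D (de D f)))) x
    + ((9 * s - 10 * s ^ 3 + s ^ 5) / 3840) * de D (de D (de D (de D (de D f)))) x

lemma Qc_node (D x : ℝ) (f : ℝ → ℝ) {s : ℝ}
    (hs : s = -5 ∨ s = -3 ∨ s = -1 ∨ s = 1 ∨ s = 3 ∨ s = 5) :
    Qc D x f s = f (x + s * D) := by
  rcases hs with h|h|h|h|h|h <;> subst h <;> (simp only [Qc, mu, de]; ring_nf)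

set_option maxHeartbeats 2000000 in
/-- Lagrange remainder for the quintic inter-patch coupling: for `f` six times
continuously differentiable on `[x−5D, x+5D]`, there is `ξ` in `(x−5D, x+5D)`
with interpolation error `(D⁶/720)(r²−1)(r²−9)(r²−25) f⁽⁶⁾(ξ)`; in particular the
consistency error of the quintic coupling is `O(D⁶)` for smooth fields. -/
theorem quintic_coupling_error (D r x : ℝ) (hD : 0 < D) (hr : |r| < 5) (f : ℝ → ℝ)
    (hf : ContDiffOn ℝ 6 f (Set.Icc (x - 5 * D) (x + 5 * D))) :
    ∃ ξ ∈ Set.Ioo (x - 5 * D) (x + 5 * D),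
      f (x + r * D) -
        (mu D f x + (r / 2) * de D f x
          + ((r ^ 2 - 1) / 8) * mu D (de D (de D f)) x
          + ((r ^ 3 - r) / 48) * de D (de D (de D f)) x
          + ((9 - 10 * r ^ 2 + r ^ 4) / 384) * mu D (de D (de D (de D (de D f)))) x
          + ((9 * r - 10 * r ^ 3 + r ^ 5) / 3840) * de D (de D (de D (de D (de D f)))) x)
      = (D ^ 6 / 720) * (r ^ 2 - 1) * (r ^ 2 - 9) * (r ^ 2 - 25) * iteratedDeriv 6 f ξ := by
  have hrr := abs_lt.mp hr
  have hQr : (mu D f x + (r / 2) * de D f x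
          + ((r ^ 2 - 1) / 8) * mu D (de D (de D f)) x
          + ((r ^ 3 - r) / 48) * de D (de D (de D f)) x
          + ((9 - 10 * r ^ 2 + r ^ 4) / 384) * mu D (de D (de D (de D (de D f)))) x
          + ((9 * r - 10 * r ^ 3 + r ^ 5) / 3840) * de D (de D (de D (de D (de D f)))) x)
      = Qc D x f r := rfl
  rw [hQr]
  by_cases hdeg : (r ^ 2 - 1) * (r ^ 2 - 9) * (r ^ 2 - 25) = 0
  · -- degenerate case: r is a node
    have hr2 : r ^ 2 - 25 ≠ 0 := by nlinarith
    have hnode : r = -1 ∨ r = 1 ∨ r = -3 ∨ r = 3 := by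
      rcases mul_eq_zero.mp hdeg with h | h
      · rcases mul_eq_zero.mp h with h1 | h1
        · have : (r - 1) * (r + 1) = 0 := by nlinarith
          rcases mul_eq_zero.mp this with h2 | h2
          · right; left; linarith
          · left; linarith
        · have : (r - 3) * (r + 3) = 0 := by nlinarith
          rcases mul_eq_zero.mp this with h2 | h2
          · right; right; right; linarith
          · right; right; left; linarith
      · exact absurd h hr2
    have hval : Qc D x f r = f (x + r * D) :=
      Qc_node D x f (by tauto)
    refine ⟨x, ⟨by nlinarith, by nlinarith⟩, ?_⟩
    rw [hval]
    have : (D ^ 6 / 720) * (r ^ 2 - 1) * (r ^ 2 - 9) * (r ^ 2 - 25)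
        = D ^ 6 / 720 * ((r ^ 2 - 1) * (r ^ 2 - 9) * (r ^ 2 - 25)) := by ring
    rw [sub_self, this, hdeg]
    ring
  · -- nondegenerate case
    set w : ℝ → ℝ := fun s => (s ^ 2 - 1) * (s ^ 2 - 9) * (s ^ 2 - 25) with hw
    set K : ℝ := (f (x + r * D) - Qc D x f r) / w r with hK
    set g : ℝ → ℝ := fun s => f (x + s * D) - (Qc D x f s + K * w s) with hg
    have hmaps : Set.MapsTo (fun s : ℝ => x + s * D) (Set.Icc (-5:ℝ) 5)
        (Set.Icc (x - 5 * D) (x + 5 * D)) := by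
      intro s hs
      simp only [Set.mem_Icc] at hs ⊢
      constructor
      · nlinarith [hs.1]
      · nlinarith [hs.2]
    have hF6 : ContDiffOn ℝ 6 (fun s => f (x + s * D)) (Set.Icc (-5:ℝ) 5) :=
      hf.comp ((contDiff_const.add (contDiff_id.mul contDiff_const)).contDiffOn) hmaps
    have hre : (fun s : ℝ => Qc D x f s + K * w s)
        = fun t : ℝ => (mu D f x - mu D (de D (de D f)) x / 8
            + 9 * mu D (de D (de D (de D (de D f)))) x / 384 - 225 * K)
          + (de D f x / 2 - de D (de D (de D f)) x / 48
            + 9 * de D (de D (de D (de D (de D f)))) x / 3840) * t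
          + (mu D (de D (de D f)) x / 8
            - 10 * mu D (de D (de D (de D (de D f)))) x / 384 + 259 * K) * t ^ 2
          + (de D (de D (de D f)) x / 48
            - 10 * de D (de D (de D (de D (de D f)))) x / 3840) * t ^ 3
          + (mu D (de D (de D (de D (de D f)))) x / 384 - 35 * K) * t ^ 4
          + (de D (de D (de D (de D (de D f)))) x / 3840) * t ^ 5
          + K * t ^ 6 := by
      funext t; rw [hw]; simp only [Qc]; ring
    have hR6 : ContDiff ℝ 6 (fun s : ℝ => Qc D x f s + K * w s) := by
      rw [hre]; fun_prop
    have hgc : ContinuousOn g (Set.Icc (-5:ℝ) 5) := by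
      rw [hg]
      exact (hF6.continuousOn).sub (hR6.continuous.continuousOn)
    have hg6 : ContDiffOn ℝ 6 g (Set.Ioo (-5:ℝ) 5) := by
      rw [hg]
      exact (hF6.mono Set.Ioo_subset_Icc_self).sub hR6.contDiffOn
    -- zeros of g
    have hwr : w r ≠ 0 := hdeg
    have hzr : g r = 0 := by
      rw [hg]; simp only; rw [hK]; field_simp; ring
    have hznode : ∀ s : ℝ, (s = -5 ∨ s = -3 ∨ s = -1 ∨ s = 1 ∨ s = 3 ∨ s = 5) → g s = 0 := by
      intro s hs
      rw [hg]; simp only [Qc_node D x f hs]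
      have : w s = 0 := by
        rcases hs with h|h|h|h|h|h <;> subst h <;> (rw [hw]; norm_num)
      rw [this]; ring
    -- main Rolle application
    have main : ∀ t : ℕ → ℝ, t 0 = -5 → t 6 = 5 → (∀ i < 6, t i < t (i+1)) →
        (∀ i ≤ 6, g (t i) = 0) → ∃ c ∈ Set.Ioo (-5:ℝ) 5, deriv^[6] g c = 0 := by
      intro t h0 h6 hm hz
      obtain ⟨c, hc1, hc2⟩ := rolle_iter 5 g t hm hz
        (by rw [h0, h6]; exact hgc)
        (by rw [h0, h6]; exact_mod_cast hg6)
      rw [h0, h6] at hc1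
      exact ⟨c, hc1, hc2⟩
    have hr1 : r ≠ 1 := by intro h; apply hwr; rw [hw, h]; norm_num
    have hr1' : r ≠ -1 := by intro h; apply hwr; rw [hw, h]; norm_num
    have hr3 : r ≠ 3 := by intro h; apply hwr; rw [hw, h]; norm_num
    have hr3' : r ≠ -3 := by intro h; apply hwr; rw [hw, h]; norm_num
    have hzeros : ∃ c ∈ Set.Ioo (-5:ℝ) 5, deriv^[6] g c = 0 := by
      rcases lt_trichotomy r (-3) with hc1 | hc1
      · refine main (fun i => [(-5:ℝ), r, -3, -1, 1, 3, 5].getD i 0) rfl rfl ?_ ?_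
        · intro i hi; interval_cases i <;> simp <;> linarith [hrr.1]
        · intro i hi; interval_cases i <;>
            first
              | exact hzr
              | exact hznode _ (by norm_num [List.getD])
      · rcases hc1 with hc1 | hc1
        · exact absurd hc1 hr3'
        rcases lt_trichotomy r (-1) with hc2 | hc2
        · refine main (fun i => [(-5:ℝ), -3, r, -1, 1, 3, 5].getD i 0) rfl rfl ?_ ?_
          · intro i hi; interval_cases i <;> simp <;> linarith
          · intro i hi; interval_cases i <;>
              first
                | exact hzr
                | exact hznode _ (by norm_num [List.getD])
        rcases hc2 with hc2 | hc2
        · exact absurd hc2 hr1'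
        rcases lt_trichotomy r 1 with hc3 | hc3
        · refine main (fun i => [(-5:ℝ), -3, -1, r, 1, 3, 5].getD i 0) rfl rfl ?_ ?_
          · intro i hi; interval_cases i <;> simp <;> linarith
          · intro i hi; interval_cases i <;>
              first
                | exact hzr
                | exact hznode _ (by norm_num [List.getD])
        rcases hc3 with hc3 | hc3
        · exact absurd hc3 hr1
        rcases lt_trichotomy r 3 with hc4 | hc4
        · refine main (fun i => [(-5:ℝ), -3, -1, 1, r, 3, 5].getD i 0) rfl rfl ?_ ?_
          · intro i hi; interval_cases i <;> simp <;> linarith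
          · intro i hi; interval_cases i <;>
              first
                | exact hzr
                | exact hznode _ (by norm_num [List.getD])
        rcases hc4 with hc4 | hc4
        · exact absurd hc4 hr3
        · refine main (fun i => [(-5:ℝ), -3, -1, 1, 3, r, 5].getD i 0) rfl rfl ?_ ?_
          · intro i hi; interval_cases i <;> simp <;> linarith [hrr.2]
          · intro i hi; interval_cases i <;>
              first
                | exact hzr
                | exact hznode _ (by norm_num [List.getD])
    obtain ⟨c, hcmem, hc0⟩ := hzeros
    refine ⟨x + c * D, ⟨by nlinarith [hcmem.1], by nlinarith [hcmem.2]⟩, ?_⟩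
    -- compute the sixth derivative of g at c
    have hmem' : x + c * D ∈ Set.Ioo (x - 5 * D) (x + 5 * D) :=
      ⟨by nlinarith [hcmem.1], by nlinarith [hcmem.2]⟩
    have hsplit : deriv^[6] g c
        = deriv^[6] (fun s => f (x + s * D)) c
          - deriv^[6] (fun s => Qc D x f s + K * w s) c := by
      rw [hg]
      exact iter_sub 6 _ _ (Set.Ioo (-5:ℝ) 5) isOpen_Ioo
        (by exact_mod_cast hF6.mono Set.Ioo_subset_Icc_self) (by exact_mod_cast hR6) c hcmem
    have hchain : deriv^[6] (fun s => f (x + s * D)) c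
        = D ^ 6 * deriv^[6] f (x + c * D) :=
      chain_affine x D 6 f (Set.Ioo (x - 5 * D) (x + 5 * D)) isOpen_Ioo
        (by exact_mod_cast hf.mono Set.Ioo_subset_Icc_self) c hmem'
    have hRc : deriv^[6] (fun s => Qc D x f s + K * w s) c = 720 * K := by
      rw [hre, poly6]
    rw [hsplit, hchain, hRc] at hc0
    have hiter : iteratedDeriv 6 f (x + c * D) = deriv^[6] f (x + c * D) := by
      rw [iteratedDeriv_eq_iterate]
    rw [hiter]
    have hKval : f (x + r * D) - Qc D x f r = K * w r := by
      rw [hK]; field_simp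
    rw [hKval]
    have hK720 : K = D ^ 6 * deriv^[6] f (x + c * D) / 720 := by linarith
    rw [hK720, hw]
    ring
end
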